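/- Work in the Euclidean plane ℝ² with coordinates (x₁, x₂). Fix ρ > 0 and s ∈ ℝ with |s| > ρ. Let D_s be the closed disk with center (s, r_s) and radius r_s = (s² + ρ²)/(2ρ), and let B_ρ(0) be the open ball of radius ρ centered at the origin. Then the set W_s = {(x₁,x₂) : x₂ ≥ 0} \ (D_s ∪ B_ρ(0)) has exactly two connected components, exactly one of which is bounded and the other unbounded. -/

import Mathlib

open Set Metric

/-- The point of the Euclidean plane `ℝ²` with coordinates `(a, b)`. -/
noncomputable def pt (a b : ℝ) : EuclideanSpace ℝ (Fin 2) :=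
  (EuclideanSpace.equiv (Fin 2) ℝ).symm ![a, b]

/-- The region `W_s`: the closed upper half-plane with the tangent disk `D_s`
(center `(s, (s²+ρ²)/(2ρ))`, radius `(s²+ρ²)/(2ρ)`) and the open ball `B_ρ(0)` removed. -/
noncomputable def Wset (ρ s : ℝ) : Set (EuclideanSpace ℝ (Fin 2)) :=
  {p : EuclideanSpace ℝ (Fin 2) | 0 ≤ p 1} \
    (Metric.closedBall (pt s ((s ^ 2 + ρ ^ 2) / (2 * ρ))) ((s ^ 2 + ρ ^ 2) / (2 * ρ)) ∪
      Metric.ball (0 : EuclideanSpace ℝ (Fin 2)) ρ)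

abbrev EE := EuclideanSpace ℝ (Fin 2)

lemma pt_zero (a b : ℝ) : pt a b 0 = a := rfl
lemma pt_one (a b : ℝ) : pt a b 1 = b := rfl
lemma pt_eta (z : EE) : pt (z 0) (z 1) = z := by ext i; fin_cases i <;> rfl

lemma dist_sq (x y : EE) : dist x y ^ 2 = (x 0 - y 0)^2 + (x 1 - y 1)^2 := by
  rw [EuclideanSpace.dist_eq, Real.sq_sqrt (by positivity)]
  simp [Fin.sum_univ_two, Real.dist_eq, sq_abs]

lemma seg_coords {p q z : EE} (hz : z ∈ segment ℝ p q) :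
    ∃ θ : ℝ, 0 ≤ θ ∧ θ ≤ 1 ∧ z 0 = (1-θ)*p 0 + θ*q 0 ∧ z 1 = (1-θ)*p 1 + θ*q 1 := by
  rw [segment_eq_image] at hz
  obtain ⟨θ, hθ, rfl⟩ := hz
  exact ⟨θ, hθ.1, hθ.2, by simp [PiLp.add_apply, PiLp.smul_apply, smul_eq_mul],
    by simp [PiLp.add_apply, PiLp.smul_apply, smul_eq_mul]⟩

lemma continuous_pt2 {α : Type*} [TopologicalSpace α] {f g : α → ℝ}
    (hf : Continuous f) (hg : Continuous g) : Continuous fun x => pt (f x) (g x) := by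
  apply Continuous.comp (EuclideanSpace.equiv (Fin 2) ℝ).symm.continuous
  exact continuous_pi fun i => by fin_cases i <;> simpa

lemma mem_Wset_iff (ρ s : ℝ) (hρ : 0 < ρ) (x : EE) :
    x ∈ Wset ρ s ↔ 0 ≤ x 1 ∧
      ((s^2+ρ^2)/(2*ρ))^2 < (x 0 - s)^2 + (x 1 - (s^2+ρ^2)/(2*ρ))^2 ∧
      ρ^2 ≤ x 0 ^2 + x 1 ^2 := by
  have hr : (0:ℝ) ≤ (s^2+ρ^2)/(2*ρ) := by positivity
  have hd1 := dist_sq x (pt s ((s^2+ρ^2)/(2*ρ)))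
  rw [pt_zero, pt_one] at hd1
  have hd2 := dist_sq x 0
  have hz : ((0:EE) 0 = 0) ∧ ((0:EE) 1 = 0) := ⟨rfl, rfl⟩
  rw [hz.1, hz.2] at hd2
  have hn1 : (0:ℝ) ≤ dist x (pt s ((s^2+ρ^2)/(2*ρ))) := dist_nonneg
  have hn2 : (0:ℝ) ≤ dist x 0 := dist_nonneg
  simp only [Wset, mem_diff, mem_union, mem_setOf_eq, mem_closedBall, mem_ball, not_or,
    not_le, not_lt]
  have hpow : (s ^ 2 + ρ ^ 2) / (2 * ρ) = (s^2+ρ^2)/(2*ρ) := rfl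
  constructor
  · rintro ⟨h1, h2, h3⟩
    exact ⟨h1, by nlinarith, by nlinarith⟩
  · rintro ⟨h1, h2, h3⟩
    exact ⟨h1, by nlinarith, by nlinarith⟩

noncomputable def refl2 : EE → EE := fun x => pt (-(x 0)) (x 1)

lemma refl2_zero (x : EE) : refl2 x 0 = -(x 0) := rfl
lemma refl2_one (x : EE) : refl2 x 1 = x 1 := rfl
lemma refl2_invol (x : EE) : refl2 (refl2 x) = x := by
  show pt (-(refl2 x 0)) (refl2 x 1) = x
  rw [refl2_zero, refl2_one, neg_neg, pt_eta]
lemma refl2_inj : Function.Injective refl2 := fun a b h => by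
  rw [← refl2_invol a, h, refl2_invol]
lemma refl2_cont : Continuous refl2 := continuous_pt2 (Continuous.neg (f := fun x : EE => x 0) (PiLp.continuous_apply (p := 2) (β := fun _ : Fin 2 => ℝ) (i := 0))) (PiLp.continuous_apply (p := 2) (β := fun _ : Fin 2 => ℝ) (i := 1))
lemma refl2_dist (x y : EE) : dist (refl2 x) (refl2 y) = dist x y := by
  rw [EuclideanSpace.dist_eq, EuclideanSpace.dist_eq]
  congr 1
  simp only [Fin.sum_univ_two, refl2_zero, refl2_one, Real.dist_eq, sq_abs]
  ring_nf
lemma refl2_isometry : Isometry refl2 := Isometry.of_dist_eq refl2_dist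
lemma refl2_bounded (t : Set EE) :
    Bornology.IsBounded (refl2 '' t) ↔ Bornology.IsBounded t := by
  constructor
  · intro h
    have h2 := refl2_isometry.lipschitz.isBounded_image h
    rwa [← image_comp, show refl2 ∘ refl2 = id from funext refl2_invol, image_id] at h2
  · exact fun h => refl2_isometry.lipschitz.isBounded_image h

lemma refl2_memW {ρ s : ℝ} (hρ : 0 < ρ) (x : EE) :
    refl2 x ∈ Wset ρ s ↔ x ∈ Wset ρ (-s) := by
  rw [mem_Wset_iff ρ s hρ, mem_Wset_iff ρ (-s) hρ, refl2_zero, refl2_one]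
  have h : ((-s)^2+ρ^2)/(2*ρ) = (s^2+ρ^2)/(2*ρ) := by ring_nf
  rw [h]
  constructor <;> rintro ⟨h1, h2, h3⟩ <;> exact ⟨h1, by nlinarith, by nlinarith⟩

lemma refl2_image_W {ρ s : ℝ} (hρ : 0 < ρ) : refl2 '' Wset ρ (-s) = Wset ρ s := by
  ext y
  constructor
  · rintro ⟨x, hx, rfl⟩; exact (refl2_memW hρ x).mpr hx
  · intro hy
    refine ⟨refl2 y, ?_, refl2_invol y⟩
    exact (refl2_memW (s := -s) hρ y).mpr (by rwa [neg_neg])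

lemma refl2_comp_subset (F : Set EE) (x : EE) (hx : x ∈ F) :
    refl2 '' connectedComponentIn F x ⊆ connectedComponentIn (refl2 '' F) (refl2 x) :=
  (isPreconnected_connectedComponentIn.image _ refl2_cont.continuousOn).subset_connectedComponentIn
    ⟨x, mem_connectedComponentIn hx, rfl⟩ (image_mono (connectedComponentIn_subset F x))

lemma refl2_comp {ρ s : ℝ} (hρ : 0 < ρ) {x : EE} (hx : x ∈ Wset ρ (-s)) :
    connectedComponentIn (Wset ρ s) (refl2 x) = refl2 '' connectedComponentIn (Wset ρ (-s)) x := by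
  apply Subset.antisymm
  · have h1 : refl2 x ∈ Wset ρ s := (refl2_memW hρ x).mpr hx
    have h2 := refl2_comp_subset (Wset ρ s) (refl2 x) h1
    have h3 : refl2 '' Wset ρ s = Wset ρ (-s) := by
      have := refl2_image_W (s := -s) (ρ := ρ) hρ; rwa [neg_neg] at this
    rw [h3, refl2_invol] at h2
    exact fun y hy => ⟨refl2 y, h2 ⟨y, hy, rfl⟩, refl2_invol y⟩
  · have h := refl2_comp_subset (Wset ρ (-s)) x hx
    rwa [refl2_image_W hρ] at h

set_option maxHeartbeats 10000000 in
lemma main_pos (ρ s : ℝ) (hρ : 0 < ρ) (hs : ρ < s) :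
    ∃ a ∈ Wset ρ s, ∃ b ∈ Wset ρ s,
      connectedComponentIn (Wset ρ s) a ≠ connectedComponentIn (Wset ρ s) b ∧
      Bornology.IsBounded (connectedComponentIn (Wset ρ s) a) ∧
      ¬ Bornology.IsBounded (connectedComponentIn (Wset ρ s) b) ∧
      ∀ x ∈ Wset ρ s,
        connectedComponentIn (Wset ρ s) x = connectedComponentIn (Wset ρ s) a ∨
        connectedComponentIn (Wset ρ s) x = connectedComponentIn (Wset ρ s) b := by
  obtain ⟨r, hr_def⟩ : ∃ r : ℝ, r = (s^2+ρ^2)/(2*ρ) := ⟨_, rfl⟩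
  have hs0 : 0 < s := hρ.trans hs
  have hr2 : s^2 + ρ^2 = 2*ρ*r := by rw [hr_def]; field_simp
  have hρr : ρ < r := by nlinarith
  have hsr : s < r := by nlinarith [mul_pos (sub_pos.mpr hs) (sub_pos.mpr hs)]
  have hr0 : 0 < r := hρ.trans hρr
  have memW : ∀ x : EE, x ∈ Wset ρ s ↔
      (0 ≤ x 1 ∧ r^2 < (x 0 - s)^2 + (x 1 - r)^2 ∧ ρ^2 ≤ x 0^2 + x 1^2) := by
    intro x; rw [hr_def]; exact mem_Wset_iff ρ s hρ x
  -- the floor function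
  set bf : ℝ → ℝ := fun t => Real.sqrt (max (ρ^2 - t^2) 0) with hbf
  have hbf0 : ∀ t, 0 ≤ bf t := fun t => Real.sqrt_nonneg _
  have hbfsq : ∀ t, (bf t)^2 = max (ρ^2 - t^2) 0 := fun t => Real.sq_sqrt (le_max_right _ _)
  have hbfρ : ∀ t, bf t ≤ ρ := by
    intro t
    have h1 := hbfsq t
    have h2 : max (ρ^2 - t^2) 0 ≤ ρ^2 := max_le (by nlinarith [sq_nonneg t]) (by positivity)
    nlinarith [hbf0 t]
  have hbf_hi : ∀ t, ρ ≤ t → bf t = 0 := by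
    intro t ht
    have h : max (ρ^2 - t^2) 0 = 0 := max_eq_right (by nlinarith)
    rw [hbf]; simp only [h, Real.sqrt_zero]
  have hbf_outB : ∀ t, ρ^2 ≤ t^2 + (bf t)^2 := by
    intro t; rw [hbfsq t]; have := le_max_left (ρ^2 - t^2) 0; linarith
  have hbf_cont : Continuous bf :=
    Real.continuous_sqrt.comp ((continuous_const.sub (continuous_pow 2)).max continuous_const)
  -- monotonicity of staying outside the disk along the floor
  have hfloor : ∀ x₀ x : ℝ, 0 < x₀ → x₀ ≤ x → x < s →
      r^2 < (x₀ - s)^2 + (bf x₀ - r)^2 → r^2 < (x - s)^2 + (bf x - r)^2 := by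
    intro x₀ x hx₀ hx₀x hxs h
    by_cases hxρ : ρ ≤ x
    · rw [hbf_hi x hxρ]
      nlinarith [mul_pos (sub_pos.mpr hxs) (sub_pos.mpr hxs)]
    · push_neg at hxρ
      have hx₀ρ : x₀ < ρ := lt_of_le_of_lt hx₀x hxρ
      have hx0 : 0 < x := lt_of_lt_of_le hx₀ hx₀x
      have hq₀ : (bf x₀)^2 = ρ^2 - x₀^2 := by rw [hbfsq]; exact max_eq_left (by nlinarith)
      have hq : (bf x)^2 = ρ^2 - x^2 := by rw [hbfsq]; exact max_eq_left (by nlinarith)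
      have key0 : r * bf x₀ < ρ*r - s*x₀ := by nlinarith [h, hq₀, hr2]
      have e2 : 0 < (ρ*r - s*x₀) + r*bf x₀ := by
        have := mul_nonneg hr0.le (hbf0 x₀); linarith
      have hq₀' : r^2*((bf x₀)^2) = r^2*(ρ^2-x₀^2) := by rw [hq₀]
      have key1' : 0 < x₀*(x₀*(s^2+r^2) - 2*ρ*r*s) := by
        nlinarith [mul_pos (sub_pos.mpr key0) e2, hq₀']
      have key1 : 2*ρ*r*s < x₀*(s^2+r^2) := by
        rcases mul_pos_iff.mp key1' with ⟨_, h'⟩ | ⟨h', _⟩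
        · linarith
        · linarith
      have key2 : 2*ρ*r*s < x*(s^2+r^2) := by
        have := mul_le_mul_of_nonneg_right hx₀x (by positivity : (0:ℝ) ≤ s^2+r^2)
        linarith
      have key3 : 0 < ρ*r - s*x := by nlinarith
      have hq' : r^2*((bf x)^2) = r^2*(ρ^2-x^2) := by rw [hq]
      have key4 : (r * bf x)^2 < (ρ*r - s*x)^2 := by
        have h5 : 0 < x*(x*(s^2+r^2) - 2*ρ*r*s) := mul_pos hx0 (by linarith)
        nlinarith [h5, hq']
      have key5 : r * bf x < ρ*r - s*x := by
        nlinarith [key3, key4, mul_nonneg hr0.le (hbf0 x)]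
      nlinarith [key5, hq, hr2]
  -- the two open sets
  set OUset : Set EE := {x : EE | 0 < x 0 ∧ x 0 < s ∧ x 1 < r} with hOUdef
  set OVset : Set EE := {x : EE | x 0 < 0 ∨ s < x 0 ∨ r < x 1} with hOVdef
  have hc0 : Continuous fun x : EE => x 0 := (PiLp.continuous_apply (p := 2) (β := fun _ : Fin 2 => ℝ) (i := 0))
  have hc1 : Continuous fun x : EE => x 1 := (PiLp.continuous_apply (p := 2) (β := fun _ : Fin 2 => ℝ) (i := 1))
  have hOUopen : IsOpen OUset := by
    have e : OUset = {x : EE | 0 < x 0} ∩ ({x : EE | x 0 < s} ∩ {x : EE | x 1 < r}) := rfl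
    rw [e]
    exact (isOpen_lt continuous_const hc0).inter
      ((isOpen_lt hc0 continuous_const).inter (isOpen_lt hc1 continuous_const))
  have hOVopen : IsOpen OVset := by
    have e : OVset = {x : EE | x 0 < 0} ∪ ({x : EE | s < x 0} ∪ {x : EE | r < x 1}) := rfl
    rw [e]
    exact (isOpen_lt hc0 continuous_const).union
      ((isOpen_lt continuous_const hc0).union (isOpen_lt continuous_const hc1))
  have hdisj : ∀ z : EE, z ∈ OUset → z ∈ OVset → False := by
    rintro z ⟨h1, h2, h3⟩ (h | h | h) <;> linarith
  set U : Set EE := Wset ρ s ∩ OUset with hUdef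
  set V : Set EE := Wset ρ s ∩ OVset with hVdef
  have hcover : ∀ x ∈ Wset ρ s, x ∈ OUset ∨ x ∈ OVset := by
    intro x hx
    obtain ⟨h1, h2, h3⟩ := (memW x).mp hx
    rcases lt_trichotomy (x 0) 0 with h | h | h
    · right; exact Or.inl h
    · right; refine Or.inr (Or.inr ?_)
      rw [h] at h2 h3
      have hx1ρ : ρ ≤ x 1 := by nlinarith
      show r < x 1
      nlinarith [sq_nonneg (x 1 - ρ), mul_nonneg (sub_nonneg.mpr hx1ρ) (sub_nonneg.mpr hx1ρ)]
    · rcases lt_trichotomy (x 0) s with h' | h' | h'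
      · rcases lt_trichotomy (x 1) r with h'' | h'' | h''
        · exact Or.inl ⟨h, h', h''⟩
        · exfalso
          rw [h''] at h2
          nlinarith [mul_pos h (by linarith : (0:ℝ) < 2*s - x 0)]
        · exact Or.inr (Or.inr (Or.inr h''))
      · right; refine Or.inr (Or.inr ?_)
        rw [h'] at h2
        show r < x 1
        nlinarith
      · exact Or.inr (Or.inr (Or.inl h'))
  -- membership of floor points in U
  have hfloor_memU : ∀ t : ℝ, 0 < t → t < s → r^2 < (t - s)^2 + (bf t - r)^2 →
      pt t (bf t) ∈ U := by
    intro t ht hts hD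
    refine ⟨(memW _).mpr ⟨?_, ?_, ?_⟩, ?_, ?_, ?_⟩
    · rw [pt_one]; exact hbf0 t
    · rw [pt_zero, pt_one]; exact hD
    · rw [pt_zero, pt_one]; exact hbf_outB t
    · rw [pt_zero]; exact ht
    · rw [pt_zero]; exact hts
    · rw [pt_one]; exact lt_of_le_of_lt (hbfρ t) hρr
  have ha1ρ : ρ < (ρ+s)/2 := by linarith
  have ha1s : (ρ+s)/2 < s := by linarith
  have hbfa1 : bf ((ρ+s)/2) = 0 := hbf_hi _ ha1ρ.le
  have hUconn : IsPreconnected U := by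
    apply isPreconnected_of_forall (pt ((ρ+s)/2) 0)
    intro u hu
    obtain ⟨huW, hu0, hus, hu1r⟩ : u ∈ Wset ρ s ∧ 0 < u 0 ∧ u 0 < s ∧ u 1 < r :=
      ⟨hu.1, hu.2.1, hu.2.2.1, hu.2.2.2⟩
    obtain ⟨hu1, huD, huB⟩ := (memW u).mp huW
    have hbu : bf (u 0) ≤ u 1 := by
      have h1 := hbfsq (u 0)
      have h2 : (bf (u 0))^2 ≤ (u 1)^2 := by
        rw [h1]; exact max_le (by nlinarith) (by positivity)
      nlinarith [hbf0 (u 0)]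
    have huf : r^2 < (u 0 - s)^2 + (bf (u 0) - r)^2 := by
      nlinarith [huD, mul_nonneg (sub_nonneg.mpr hbu) (by linarith : (0:ℝ) ≤ 2*r - u 1 - bf (u 0))]
    have hmin0 : 0 < min (u 0) ((ρ+s)/2) := lt_min hu0 (by linarith)
    have hmaxs : max (u 0) ((ρ+s)/2) < s := max_lt hus ha1s
    have hminf : r^2 < (min (u 0) ((ρ+s)/2) - s)^2 + (bf (min (u 0) ((ρ+s)/2)) - r)^2 := by
      rcases le_total (u 0) ((ρ+s)/2) with h | h
      · rw [min_eq_left h]; exact huf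
      · rw [min_eq_right h, hbfa1]
        nlinarith [mul_pos (sub_pos.mpr ha1s) (sub_pos.mpr ha1s)]
    have hfloorU : ∀ t ∈ Icc (min (u 0) ((ρ+s)/2)) (max (u 0) ((ρ+s)/2)), pt t (bf t) ∈ U := by
      intro t ht
      have h1 : 0 < t := lt_of_lt_of_le hmin0 ht.1
      have h2 : t < s := lt_of_le_of_lt ht.2 hmaxs
      exact hfloor_memU t h1 h2 (hfloor _ _ hmin0 ht.1 h2 hminf)
    refine ⟨segment ℝ (pt (u 0) (bf (u 0))) (pt (u 0) (u 1)) ∪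
        (fun t => pt t (bf t)) '' Icc (min (u 0) ((ρ+s)/2)) (max (u 0) ((ρ+s)/2)),
        ?_, ?_, ?_, ?_⟩
    · rintro z (hz | ⟨t, ht, rfl⟩)
      · obtain ⟨θ, hθ0, hθ1, hz0, hz1⟩ := seg_coords hz
        rw [pt_zero, pt_zero] at hz0
        rw [pt_one, pt_one] at hz1
        have hz0' : z 0 = u 0 := by rw [hz0]; ring
        have hzlo : bf (u 0) ≤ z 1 := by rw [hz1]; nlinarith [hbu]
        have hzhi : z 1 ≤ u 1 := by rw [hz1]; nlinarith [hbu]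
        refine ⟨(memW z).mpr ⟨le_trans (hbf0 _) hzlo, ?_, ?_⟩, ?_, ?_, ?_⟩
        · rw [hz0']
          nlinarith [huD, mul_nonneg (sub_nonneg.mpr hzhi)
            (by linarith : (0:ℝ) ≤ 2*r - z 1 - u 1)]
        · rw [hz0']
          nlinarith [hbf_outB (u 0), hbf0 (u 0), hzlo]
        · show 0 < z 0; rw [hz0']; exact hu0
        · show z 0 < s; rw [hz0']; exact hus
        · show z 1 < r; exact lt_of_le_of_lt hzhi hu1r
      · exact hfloorU t ht
    · right
      exact ⟨(ρ+s)/2, ⟨min_le_right _ _, le_max_right _ _⟩,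
        by show pt ((ρ+s)/2) (bf ((ρ+s)/2)) = pt ((ρ+s)/2) 0; rw [hbfa1]⟩
    · left
      exact pt_eta u ▸ right_mem_segment ℝ _ _
    · apply IsPreconnected.union (pt (u 0) (bf (u 0)))
      · exact left_mem_segment ℝ _ _
      · exact ⟨u 0, ⟨min_le_left _ _, le_max_left _ _⟩, rfl⟩
      · exact (convex_segment _ _).isPreconnected
      · exact isPreconnected_Icc.image _ (continuous_pt2 continuous_id hbf_cont).continuousOn
  have hsky : ∀ z : EE, z 1 = 2*r+1 → z ∈ V := by
    intro z hz
    refine ⟨(memW z).mpr ⟨?_, ?_, ?_⟩, Or.inr (Or.inr ?_)⟩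
    · rw [hz]; linarith
    · rw [hz]; nlinarith [sq_nonneg (z 0 - s)]
    · rw [hz]; nlinarith [sq_nonneg (z 0)]
    · show r < z 1; rw [hz]; linarith
  have hVconn : IsPreconnected V := by
    apply isPreconnected_of_forall (pt 0 (2*r+1))
    intro v hv
    obtain ⟨hvW, hvO⟩ := hv
    obtain ⟨hv1, hvD, hvB⟩ := (memW v).mp hvW
    rcases hvO with hA | hB | hC
    · -- v 0 < 0 : go left, then up, then to the basepoint
      obtain ⟨w, hw⟩ : ∃ w : ℝ, w = s - r - ρ - 1 := ⟨_, rfl⟩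
      have hw0 : w < -ρ := by rw [hw]; linarith
      have hwneg : w < 0 := by linarith
      have hwB : ρ^2 < w^2 := by nlinarith
      have hwD : r^2 < (w - s)^2 := by
        have e : w - s = -(r + ρ + 1) := by rw [hw]; ring
        rw [e]; nlinarith
      refine ⟨(segment ℝ (pt (v 0) (v 1)) (pt w (v 1)) ∪
          segment ℝ (pt w (v 1)) (pt w (2*r+1))) ∪
          segment ℝ (pt w (2*r+1)) (pt 0 (2*r+1)), ?_, ?_, ?_, ?_⟩
      · rintro z ((hz | hz) | hz)
        · obtain ⟨θ, hθ0, hθ1, hz0, hz1⟩ := seg_coords hz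
          rw [pt_zero, pt_zero] at hz0
          rw [pt_one, pt_one] at hz1
          have hz1' : z 1 = v 1 := by rw [hz1]; ring
          rcases le_total w (v 0) with hcase | hcase
          · have hle : z 0 ≤ v 0 := by rw [hz0]; nlinarith
            have hz0neg : z 0 < 0 := lt_of_le_of_lt hle hA
            refine ⟨(memW z).mpr ⟨?_, ?_, ?_⟩, Or.inl hz0neg⟩
            · rw [hz1']; exact hv1
            · rw [hz1']
              nlinarith [hvD, mul_nonneg (sub_nonneg.mpr hle)
                (by linarith : (0:ℝ) ≤ 2*s - z 0 - v 0)]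
            · rw [hz1']
              nlinarith [hvB, mul_nonneg (sub_nonneg.mpr hle)
                (by linarith : (0:ℝ) ≤ -(z 0) - v 0)]
          · have hle : z 0 ≤ w := by rw [hz0]; nlinarith
            have hz0neg : z 0 < 0 := lt_of_le_of_lt hle hwneg
            refine ⟨(memW z).mpr ⟨?_, ?_, ?_⟩, Or.inl hz0neg⟩
            · rw [hz1']; exact hv1
            · rw [hz1']
              nlinarith [hwD, sq_nonneg (v 1 - r), mul_nonneg (sub_nonneg.mpr hle)
                (by linarith : (0:ℝ) ≤ 2*s - z 0 - w)]
            · rw [hz1']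
              nlinarith [hwB, sq_nonneg (v 1), mul_nonneg (sub_nonneg.mpr hle)
                (by linarith : (0:ℝ) ≤ -(z 0) - w)]
        · obtain ⟨θ, hθ0, hθ1, hz0, hz1⟩ := seg_coords hz
          rw [pt_zero, pt_zero] at hz0
          rw [pt_one, pt_one] at hz1
          have hz0' : z 0 = w := by rw [hz0]; ring
          have hz1lo : 0 ≤ z 1 := by
            rw [hz1]
            nlinarith [mul_nonneg (by linarith : (0:ℝ) ≤ 1-θ) hv1,
              mul_nonneg hθ0 (by linarith : (0:ℝ) ≤ 2*r+1)]
          refine ⟨(memW z).mpr ⟨hz1lo, ?_, ?_⟩, Or.inl (by rw [hz0']; exact hwneg)⟩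
          · rw [hz0']; nlinarith [hwD, sq_nonneg (z 1 - r)]
          · rw [hz0']; nlinarith [hwB, sq_nonneg (z 1)]
        · obtain ⟨θ, hθ0, hθ1, hz0, hz1⟩ := seg_coords hz
          rw [pt_one, pt_one] at hz1
          exact hsky z (by rw [hz1]; ring)
      · right; exact right_mem_segment ℝ _ _
      · left; left; exact pt_eta v ▸ left_mem_segment ℝ _ _
      · apply IsPreconnected.union (pt w (2*r+1))
        · right; exact right_mem_segment ℝ _ _
        · exact left_mem_segment ℝ _ _
        · apply IsPreconnected.union (pt w (v 1))
          · exact right_mem_segment ℝ _ _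
          · exact left_mem_segment ℝ _ _
          · exact (convex_segment _ _).isPreconnected
          · exact (convex_segment _ _).isPreconnected
        · exact (convex_segment _ _).isPreconnected
    · -- s < v 0 : go right, then up, then to the basepoint
      obtain ⟨w, hw⟩ : ∃ w : ℝ, w = s + r + ρ + 1 := ⟨_, rfl⟩
      have hws : s < w := by rw [hw]; linarith
      have hwD : r^2 < (w - s)^2 := by
        have e : w - s = r + ρ + 1 := by rw [hw]; ring
        rw [e]; nlinarith
      have hwB : ρ^2 < w^2 := by nlinarith
      refine ⟨(segment ℝ (pt (v 0) (v 1)) (pt w (v 1)) ∪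
          segment ℝ (pt w (v 1)) (pt w (2*r+1))) ∪
          segment ℝ (pt w (2*r+1)) (pt 0 (2*r+1)), ?_, ?_, ?_, ?_⟩
      · rintro z ((hz | hz) | hz)
        · obtain ⟨θ, hθ0, hθ1, hz0, hz1⟩ := seg_coords hz
          rw [pt_zero, pt_zero] at hz0
          rw [pt_one, pt_one] at hz1
          have hz1' : z 1 = v 1 := by rw [hz1]; ring
          rcases le_total (v 0) w with hcase | hcase
          · have hge : v 0 ≤ z 0 := by rw [hz0]; nlinarith
            have hz0s : s < z 0 := lt_of_lt_of_le hB hge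
            refine ⟨(memW z).mpr ⟨?_, ?_, ?_⟩, Or.inr (Or.inl hz0s)⟩
            · rw [hz1']; exact hv1
            · rw [hz1']
              nlinarith [hvD, mul_nonneg (sub_nonneg.mpr hge)
                (by linarith : (0:ℝ) ≤ z 0 + v 0 - 2*s)]
            · rw [hz1']
              nlinarith [sq_nonneg (z 1), mul_pos (by linarith : (0:ℝ) < z 0 - ρ)
                (by linarith : (0:ℝ) < z 0 + ρ), sq_nonneg (v 1)]
          · have hge : w ≤ z 0 := by rw [hz0]; nlinarith
            have hz0s : s < z 0 := lt_of_lt_of_le hws hge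
            refine ⟨(memW z).mpr ⟨?_, ?_, ?_⟩, Or.inr (Or.inl hz0s)⟩
            · rw [hz1']; exact hv1
            · rw [hz1']
              nlinarith [hwD, sq_nonneg (v 1 - r), mul_nonneg (sub_nonneg.mpr hge)
                (by linarith : (0:ℝ) ≤ z 0 + w - 2*s)]
            · rw [hz1']
              nlinarith [sq_nonneg (v 1), mul_pos (by linarith : (0:ℝ) < z 0 - ρ)
                (by linarith : (0:ℝ) < z 0 + ρ)]
        · obtain ⟨θ, hθ0, hθ1, hz0, hz1⟩ := seg_coords hz
          rw [pt_zero, pt_zero] at hz0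
          rw [pt_one, pt_one] at hz1
          have hz0' : z 0 = w := by rw [hz0]; ring
          have hz1lo : 0 ≤ z 1 := by
            rw [hz1]
            nlinarith [mul_nonneg (by linarith : (0:ℝ) ≤ 1-θ) hv1,
              mul_nonneg hθ0 (by linarith : (0:ℝ) ≤ 2*r+1)]
          refine ⟨(memW z).mpr ⟨hz1lo, ?_, ?_⟩, Or.inr (Or.inl (by rw [hz0']; exact hws))⟩
          · rw [hz0']; nlinarith [hwD, sq_nonneg (z 1 - r)]
          · rw [hz0']; nlinarith [hwB, sq_nonneg (z 1)]
        · obtain ⟨θ, hθ0, hθ1, hz0, hz1⟩ := seg_coords hz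
          rw [pt_one, pt_one] at hz1
          exact hsky z (by rw [hz1]; ring)
      · right; exact right_mem_segment ℝ _ _
      · left; left; exact pt_eta v ▸ left_mem_segment ℝ _ _
      · apply IsPreconnected.union (pt w (2*r+1))
        · right; exact right_mem_segment ℝ _ _
        · exact left_mem_segment ℝ _ _
        · apply IsPreconnected.union (pt w (v 1))
          · exact right_mem_segment ℝ _ _
          · exact left_mem_segment ℝ _ _
          · exact (convex_segment _ _).isPreconnected
          · exact (convex_segment _ _).isPreconnected
        · exact (convex_segment _ _).isPreconnected
    · -- r < v 1 : go straight up, then to the basepoint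
      refine ⟨segment ℝ (pt (v 0) (v 1)) (pt (v 0) (2*r+1)) ∪
          segment ℝ (pt (v 0) (2*r+1)) (pt 0 (2*r+1)), ?_, ?_, ?_, ?_⟩
      · rintro z (hz | hz)
        · obtain ⟨θ, hθ0, hθ1, hz0, hz1⟩ := seg_coords hz
          rw [pt_zero, pt_zero] at hz0
          rw [pt_one, pt_one] at hz1
          have hz0' : z 0 = v 0 := by rw [hz0]; ring
          have hz1r : r < z 1 := by
            rw [hz1]
            rcases le_total (v 1) (2*r+1) with h | h <;> nlinarith
          refine ⟨(memW z).mpr ⟨by linarith, ?_, ?_⟩, Or.inr (Or.inr hz1r)⟩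
          · rw [hz0']
            rcases le_total (v 1) (2*r+1) with h | h
            · have hge : v 1 ≤ z 1 := by rw [hz1]; nlinarith
              nlinarith [hvD, mul_nonneg (sub_nonneg.mpr hge)
                (by linarith : (0:ℝ) ≤ z 1 + v 1 - 2*r)]
            · have hge : 2*r+1 ≤ z 1 := by rw [hz1]; nlinarith
              nlinarith [sq_nonneg (v 0 - s), mul_nonneg (by linarith : (0:ℝ) ≤ z 1 - (2*r+1))
                (by linarith : (0:ℝ) ≤ z 1 + 1)]
          · nlinarith [sq_nonneg (z 0), mul_pos (by linarith : (0:ℝ) < z 1 - ρ)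
              (by linarith : (0:ℝ) < z 1 + ρ)]
        · obtain ⟨θ, hθ0, hθ1, hz0, hz1⟩ := seg_coords hz
          rw [pt_one, pt_one] at hz1
          exact hsky z (by rw [hz1]; ring)
      · right; exact right_mem_segment ℝ _ _
      · left; exact pt_eta v ▸ left_mem_segment ℝ _ _
      · apply IsPreconnected.union (pt (v 0) (2*r+1))
        · exact right_mem_segment ℝ _ _
        · exact left_mem_segment ℝ _ _
        · exact (convex_segment _ _).isPreconnected
        · exact (convex_segment _ _).isPreconnected
  -- component identification
  have hcompU : ∀ x ∈ U, connectedComponentIn (Wset ρ s) x = U := by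
    intro x hx
    apply Subset.antisymm
    · intro y hy
      have hyW : y ∈ Wset ρ s := connectedComponentIn_subset _ _ hy
      by_contra hyU
      have hyV : y ∈ OVset := by
        rcases hcover y hyW with h | h
        · exact absurd ⟨hyW, h⟩ hyU
        · exact h
      obtain ⟨z, _, hzU, hzV⟩ :=
        isPreconnected_connectedComponentIn (F := Wset ρ s) (x := x) OUset OVset hOUopen hOVopen
          (fun w hw => hcover w (connectedComponentIn_subset _ _ hw))
          ⟨x, mem_connectedComponentIn hx.1, hx.2⟩ ⟨y, hy, hyV⟩
      exact hdisj z hzU hzV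
    · exact hUconn.subset_connectedComponentIn hx inter_subset_left
  have hcompV : ∀ x ∈ V, connectedComponentIn (Wset ρ s) x = V := by
    intro x hx
    apply Subset.antisymm
    · intro y hy
      have hyW : y ∈ Wset ρ s := connectedComponentIn_subset _ _ hy
      by_contra hyV
      have hyU : y ∈ OUset := by
        rcases hcover y hyW with h | h
        · exact h
        · exact absurd ⟨hyW, h⟩ hyV
      obtain ⟨z, _, hzU, hzV⟩ :=
        isPreconnected_connectedComponentIn (F := Wset ρ s) (x := x) OUset OVset hOUopen hOVopen
          (fun w hw => hcover w (connectedComponentIn_subset _ _ hw))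
          ⟨y, hy, hyU⟩ ⟨x, mem_connectedComponentIn hx.1, hx.2⟩
      exact hdisj z hzU hzV
    · exact hVconn.subset_connectedComponentIn hx inter_subset_left
  -- boundedness
  have hUbdd : Bornology.IsBounded U := by
    apply (isBounded_closedBall (x := (0:EE)) (r := s + r)).subset
    intro x hx
    obtain ⟨hxW, hx0, hxs, hx1r⟩ : x ∈ Wset ρ s ∧ 0 < x 0 ∧ x 0 < s ∧ x 1 < r :=
      ⟨hx.1, hx.2.1, hx.2.2.1, hx.2.2.2⟩
    obtain ⟨hx1, _, _⟩ := (memW x).mp hxW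
    have hd := dist_sq x 0
    rw [show ((0:EE) 0) = 0 from rfl, show ((0:EE) 1) = 0 from rfl] at hd
    rw [mem_closedBall]
    nlinarith [dist_nonneg (x := x) (y := (0:EE)), hd]
  have hVunb : ¬ Bornology.IsBounded V := by
    intro hb
    obtain ⟨R, hR⟩ := hb.subset_closedBall (0:EE)
    have hp : pt (|R| + 1) (2*r+1) ∈ V := hsky _ (pt_one _ _)
    have hle := hR hp
    rw [mem_closedBall] at hle
    have hd := dist_sq (pt (|R|+1) (2*r+1)) 0
    rw [pt_zero, pt_one, show ((0:EE) 0) = 0 from rfl, show ((0:EE) 1) = 0 from rfl] at hd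
    nlinarith [abs_nonneg R, le_abs_self R,
      dist_nonneg (x := pt (|R|+1) (2*r+1)) (y := (0:EE)), hr0]
  -- the two base points
  have ha0U : pt ((ρ+s)/2) 0 ∈ U := by
    have h := hfloor_memU ((ρ+s)/2) (by linarith) ha1s
      (by rw [hbfa1]; nlinarith [mul_pos (sub_pos.mpr ha1s) (sub_pos.mpr ha1s)])
    rwa [hbfa1] at h
  have hb0V : pt 0 (2*r+1) ∈ V := hsky _ (pt_one _ _)
  refine ⟨pt ((ρ+s)/2) 0, ha0U.1, pt 0 (2*r+1), hb0V.1, ?_, ?_, ?_, ?_⟩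
  · rw [hcompU _ ha0U, hcompV _ hb0V]
    intro h
    have hmem : pt ((ρ+s)/2) 0 ∈ V := h ▸ ha0U
    rcases hmem.2 with h' | h' | h'
    · rw [pt_zero] at h'; linarith
    · rw [pt_zero] at h'; linarith
    · rw [pt_one] at h'; linarith
  · rw [hcompU _ ha0U]; exact hUbdd
  · rw [hcompV _ hb0V]; exact hVunb
  · intro x hxW
    rcases hcover x hxW with h | h
    · left; rw [hcompU x ⟨hxW, h⟩, hcompU _ ha0U]
    · right; rw [hcompV x ⟨hxW, h⟩, hcompV _ hb0V]

/-- For `ρ > 0` and `|s| > ρ`, the set `W_s` has exactly two connected components,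
exactly one of which is bounded and the other unbounded. -/
theorem Wset_two_components (ρ s : ℝ) (hρ : 0 < ρ) (hs : ρ < |s|) :
    ∃ a ∈ Wset ρ s, ∃ b ∈ Wset ρ s,
      connectedComponentIn (Wset ρ s) a ≠ connectedComponentIn (Wset ρ s) b ∧
      Bornology.IsBounded (connectedComponentIn (Wset ρ s) a) ∧
      ¬ Bornology.IsBounded (connectedComponentIn (Wset ρ s) b) ∧
      ∀ x ∈ Wset ρ s,
        connectedComponentIn (Wset ρ s) x = connectedComponentIn (Wset ρ s) a ∨
        connectedComponentIn (Wset ρ s) x = connectedComponentIn (Wset ρ s) b := by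
  rcases le_or_gt 0 s with h | h
  · rw [abs_of_nonneg h] at hs
    exact main_pos ρ s hρ hs
  · rw [abs_of_neg h] at hs
    obtain ⟨a, haW, b, hbW, hne, hab, hbb, hall⟩ := main_pos ρ (-s) hρ hs
    have hWa : refl2 a ∈ Wset ρ s := (refl2_memW hρ a).mpr haW
    have hWb : refl2 b ∈ Wset ρ s := (refl2_memW hρ b).mpr hbW
    have hca := refl2_comp (s := s) hρ haW
    have hcb := refl2_comp (s := s) hρ hbW
    refine ⟨refl2 a, hWa, refl2 b, hWb, ?_, ?_, ?_, ?_⟩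
    · rw [hca, hcb]
      intro h'
      exact hne ((Set.image_injective.mpr refl2_inj) h')
    · rw [hca]; exact (refl2_bounded _).mpr hab
    · rw [hcb]; intro h'; exact hbb ((refl2_bounded _).mp h')
    · intro x hxW
      have hx' : refl2 x ∈ Wset ρ (-s) := by
        have h2 := refl2_memW (s := -s) (ρ := ρ) hρ x
        rw [neg_neg] at h2
        exact h2.mpr hxW
      have hxe : connectedComponentIn (Wset ρ s) x
          = refl2 '' connectedComponentIn (Wset ρ (-s)) (refl2 x) := by
        have h2 := refl2_comp (s := s) hρ hx'
        rwa [refl2_invol] at h2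
      rcases hall (refl2 x) hx' with h' | h'
      · left; rw [hxe, h', hca]
      · right; rw [hxe, h', hcb]
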